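/- For all n, a permutation π ∈ S_n avoids both 2-1-3 and 34-21 if and only if it avoids both 2-1-3 and the classical pattern 3-4-2-1. -/

import Mathlib

/-- `π` contains the classical pattern 2-1-3: indices `i < j < k` with `π j < π i < π k`. -/
def Contains213 {n : ℕ} (π : Equiv.Perm (Fin n)) : Prop :=
  ∃ i j k : Fin n, i < j ∧ j < k ∧ π j < π i ∧ π i < π k

/-- `π` contains the generalized pattern 34-21 (both pairs adjacent). -/
def Contains34'21 {n : ℕ} (π : Equiv.Perm (Fin n)) : Prop :=
  ∃ i i' k k' : Fin n, (i' : ℕ) = (i : ℕ) + 1 ∧ (k' : ℕ) = (k : ℕ) + 1 ∧ i' < k ∧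
    π k' < π k ∧ π k < π i ∧ π i < π i'

/-- `π` contains the classical pattern 3-4-2-1. -/
def Contains3421 {n : ℕ} (π : Equiv.Perm (Fin n)) : Prop :=
  ∃ i j k l : Fin n, i < j ∧ j < k ∧ k < l ∧ π l < π k ∧ π k < π i ∧ π i < π j

private lemma aux15 {n : ℕ} (π : Equiv.Perm (Fin n)) (h213 : ¬ Contains213 π) :
    ∀ m : ℕ, ∀ i j k l : Fin n, (l : ℕ) - k = m → i < j → j < k → k < l →
    π l < π k → π k < π i → π i < π j → Contains34'21 π := by
  intro m
  induction m using Nat.strong_induction_on with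
  | _ m ih =>
  intro i j k l hm hij hjk hkl h1 h2 h3
  have hk1 : (k : ℕ) + 1 < n := lt_of_le_of_lt (Nat.succ_le_of_lt hkl) l.isLt
  set k1 : Fin n := ⟨(k : ℕ) + 1, hk1⟩ with hk1def
  have hkk1 : k < k1 := by simp [Fin.lt_def, -Fin.val_fin_lt, k1]
  by_cases hc : π k1 < π k
  · -- fix first pair
    have hi1 : (i : ℕ) + 1 < n := lt_of_le_of_lt (Nat.succ_le_of_lt hij) j.isLt
    set i1 : Fin n := ⟨(i : ℕ) + 1, hi1⟩ with hi1def
    have hii1 : i < i1 := by simp [Fin.lt_def, -Fin.val_fin_lt, i1]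
    by_cases hd : π i < π i1
    · exact ⟨i, i1, k, k1, rfl, rfl, by
        have : (i : ℕ) + 1 ≤ (j : ℕ) := hij
        have : (j : ℕ) < (k : ℕ) := hjk
        simp [Fin.lt_def, -Fin.val_fin_lt, i1]; omega, hc, h2, hd⟩
    · exfalso
      apply h213
      have hne : i1 ≠ i := by simp [Fin.ext_iff, i1]
      have : π i1 < π i := lt_of_le_of_ne (not_lt.mp hd) (fun h => hne (π.injective h))
      refine ⟨i, i1, j, hii1, ?_, this, h3⟩
      have hij' : (i : ℕ) + 1 ≤ (j : ℕ) := hij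
      have hne2 : i1 ≠ j := by
        intro h; rw [h] at this; exact absurd h3 (not_lt.mpr this.le)
      exact lt_of_le_of_ne (by rw [Fin.le_def]; simp only [i1]; omega) hne2
  · have hne : k ≠ k1 := by simp [Fin.ext_iff, k1]
    have hk1k : π k < π k1 := lt_of_le_of_ne (not_lt.mp hc) (fun h => hne (π.injective h))
    by_cases he : π k1 < π i
    · have hk1l : k1 < l := by
        have h1' : (k : ℕ) + 1 ≤ (l : ℕ) := hkl
        have hne2 : k1 ≠ l := by
          intro h; rw [h] at hk1k; exact absurd h1 (not_lt.mpr hk1k.le)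
        exact lt_of_le_of_ne (by rw [Fin.le_def]; simp only [k1]; omega) hne2
      have hjk1 : j < k1 := lt_trans hjk hkk1
      exact ih ((l : ℕ) - k1) (by simp [hk1def]; omega) i j k1 l rfl hij hjk1 hk1l
        (lt_trans h1 hk1k) he h3
    · exfalso
      apply h213
      have hne2 : i ≠ k1 := ne_of_lt (lt_trans (lt_trans hij hjk) hkk1)
      have : π i < π k1 := lt_of_le_of_ne (not_lt.mp he) (fun h => hne2 (π.injective h))
      exact ⟨i, k, k1, lt_trans hij hjk, hkk1, h2, this⟩

theorem stmt15 (n : ℕ) (π : Equiv.Perm (Fin n)) :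
    (¬ Contains213 π ∧ ¬ Contains34'21 π) ↔ (¬ Contains213 π ∧ ¬ Contains3421 π) := by
  constructor
  · rintro ⟨h213, h34⟩
    refine ⟨h213, fun ⟨i, j, k, l, hij, hjk, hkl, h1, h2, h3⟩ =>
      h34 (aux15 π h213 ((l : ℕ) - k) i j k l rfl hij hjk hkl h1 h2 h3)⟩
  · rintro ⟨h213, h3421⟩
    refine ⟨h213, fun ⟨i, i', k, k', hi', hk', hik, h1, h2, h3⟩ => h3421 ?_⟩
    refine ⟨i, i', k, k', ?_, hik, ?_, h1, h2, h3⟩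
    · simp [Fin.lt_def, -Fin.val_fin_lt, hi']
    · simp [Fin.lt_def, -Fin.val_fin_lt, hk']
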